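/- arXiv:0809.0488 — 4 statements merged into one kernel-verified Lean document; each statement's English description precedes it below -/
import Mathlib

section
/- For every n ≥ 2, the number of full binary trees with n leaves avoiding the pattern t3 = node(node(L,L), node(L,L)) is exactly 2^(n-2). -/
inductive BTree : Type
  | leaf : BTree
  | node : BTree → BTree → BTree
  deriving DecidableEq

namespace BTree

def leaves : BTree → ℕ
  | leaf => 1
  | node l r => leaves l + leaves r

def Matches : BTree → BTree → Bool
  | _, leaf => true
  | leaf, node _ _ => false
  | node l r, node tl tr => Matches l tl && Matches r tr

def Contains : BTree → BTree → Bool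
  | leaf, t => Matches leaf t
  | node l r, t => Matches (node l r) t || Contains l t || Contains r t

def Avoids (T t : BTree) : Prop := Contains T t = false

end BTree

namespace BTree

def t3 : BTree := .node (.node .leaf .leaf) (.node .leaf .leaf)

def build : List Bool → BTree
  | [] => .node .leaf .leaf
  | b :: bs => if b then .node .leaf (build bs) else .node (build bs) .leaf

lemma build_ne_leaf (l : List Bool) : build l ≠ .leaf := by
  cases l with
  | nil => simp [build]
  | cons b bs => cases b <;> simp [build]

lemma one_le_leaves (t : BTree) : 1 ≤ t.leaves := by
  induction t with
  | leaf => simp [leaves]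
  | node a b iha ihb => simp [leaves]; omega

lemma build_leaves (l : List Bool) : (build l).leaves = l.length + 2 := by
  induction l with
  | nil => simp [build, leaves]
  | cons b bs ih => cases b <;> simp [build, leaves, ih] <;> omega

lemma matches_nodeLL (t : BTree) :
    Matches t (.node .leaf .leaf) = false ↔ t = .leaf := by
  cases t <;> simp [Matches]

lemma avoids_node_iff (a b : BTree) :
    (BTree.node a b).Avoids t3 ↔
      (a = .leaf ∨ b = .leaf) ∧ a.Avoids t3 ∧ b.Avoids t3 := by
  simp only [Avoids, t3, Contains, Matches, Bool.or_eq_false_iff,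
    Bool.and_eq_false_iff, matches_nodeLL]
  tauto

lemma build_avoids (l : List Bool) : (build l).Avoids t3 := by
  induction l with
  | nil => rfl
  | cons b bs ih =>
    cases b <;> simp [build, avoids_node_iff, ih] <;> rfl

lemma build_inj : Function.Injective build := by
  intro l l' h
  induction l generalizing l' with
  | nil =>
    cases l' with
    | nil => rfl
    | cons b bs =>
      exfalso
      cases b <;> simp [build] at h <;>
        exact build_ne_leaf bs h.symm
  | cons b bs ih =>
    cases l' with
    | nil =>
      exfalso
      cases b <;> simp [build] at h <;>
        exact build_ne_leaf bs h
    | cons b' bs' =>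
      cases b <;> cases b' <;> simp [build] at h <;>
        first
          | rw [ih h]
          | exact absurd h.1 (build_ne_leaf bs)
          | exact absurd h.2 (build_ne_leaf bs)
          | exact absurd h.1.symm (build_ne_leaf bs)
          | exact absurd h.2.symm (build_ne_leaf bs)

lemma build_surj (T : BTree) (h2 : 2 ≤ T.leaves) (hA : T.Avoids t3) :
    ∃ l : List Bool, build l = T := by
  induction T with
  | leaf => simp [leaves] at h2
  | node a b iha ihb =>
    rw [avoids_node_iff] at hA
    obtain ⟨hm, hAa, hAb⟩ := hA
    rcases hm with ha | hb
    · subst ha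
      cases b with
      | leaf => exact ⟨[], rfl⟩
      | node x y =>
        have hx := one_le_leaves x
        have hy := one_le_leaves y
        have : 2 ≤ (BTree.node x y).leaves := by simp [leaves]; omega
        obtain ⟨l, hl⟩ := ihb this hAb
        exact ⟨true :: l, by simp [build, hl]⟩
    · subst hb
      cases a with
      | leaf => exact ⟨[], rfl⟩
      | node x y =>
        have hx := one_le_leaves x
        have hy := one_le_leaves y
        have : 2 ≤ (BTree.node x y).leaves := by simp [leaves]; omega
        obtain ⟨l, hl⟩ := iha this hAa
        exact ⟨false :: l, by simp [build, hl]⟩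

end BTree

theorem stmt_9 (n : ℕ) (hn : 2 ≤ n) :
    Nat.card {T : BTree //
      T.leaves = n ∧ T.Avoids (.node (.node .leaf .leaf) (.node .leaf .leaf))} =
      2 ^ (n - 2) := by
  have e : List.Vector Bool (n - 2) ≃
      {T : BTree //
        T.leaves = n ∧ T.Avoids (.node (.node .leaf .leaf) (.node .leaf .leaf))} := by
    refine Equiv.ofBijective
      (fun l => ⟨BTree.build l.1, ?_, BTree.build_avoids l.1⟩) ⟨?_, ?_⟩
    · rw [BTree.build_leaves, l.2]; omega
    · intro l l' h
      exact Subtype.ext (BTree.build_inj (congrArg Subtype.val h))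
    · rintro ⟨T, hT, hA⟩
      obtain ⟨l, hl⟩ := BTree.build_surj T (by omega) hA
      refine ⟨⟨l, ?_⟩, Subtype.ext hl⟩
      have := BTree.build_leaves l
      rw [hl, hT] at this; omega
  rw [← Nat.card_congr e, Nat.card_eq_fintype_card, card_vector,
    Fintype.card_bool]
end

section
/- For every n ≥ 2, the number of full binary trees with n leaves avoiding the pattern t2 = node(L, node(node(L,L), L)) is exactly 2^(n-2). -/
namespace BTreeAux

open BTree

def pat : BTree := .node .leaf (.node (.node .leaf .leaf) .leaf)

/-- decoder from bit lists to avoiding trees -/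
def decode : List Bool → BTree
  | [] => .node .leaf .leaf
  | false :: bs => .node (decode bs) .leaf
  | true :: bs =>
    match decode bs with
    | .leaf => .leaf
    | .node l r => .node l (.node .leaf r)

def encode : BTree → List Bool
  | .node l (.node _ r) => true :: encode (.node l r)
  | .node (.node a b) .leaf => false :: encode (.node a b)
  | _ => []

lemma decode_node (bs : List Bool) : ∃ l r, decode bs = .node l r := by
  induction bs with
  | nil => exact ⟨_, _, rfl⟩
  | cons b bs ih =>
    obtain ⟨l, r, h⟩ := ih
    cases b
    · exact ⟨_, _, rfl⟩
    · exact ⟨l, .node .leaf r, by simp [decode, h]⟩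

lemma leaves_decode (bs : List Bool) : (decode bs).leaves = bs.length + 2 := by
  induction bs with
  | nil => rfl
  | cons b bs ih =>
    obtain ⟨l, r, h⟩ := decode_node bs
    cases b
    · simp [decode, leaves, ih]
    · simp only [decode, h]
      have : l.leaves + r.leaves = bs.length + 2 := by rw [← ih, h]; rfl
      simp [leaves, List.length_cons]; omega

lemma avoids_node_iff (l r : BTree) :
    (BTree.node l r).Avoids pat ↔
      l.Avoids pat ∧ r.Avoids pat ∧ ∀ a b c, r ≠ .node (.node a b) c := by
  cases r with
  | leaf => simp [Avoids, Contains, Matches, pat]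
  | node rl rr =>
    cases rl with
    | leaf =>
      simp [Avoids, Contains, Matches, pat]
    | node a b =>
      constructor
      · intro h
        exfalso
        simp [Avoids, Contains, Matches, pat] at h
      · intro ⟨_, _, h⟩
        exact absurd rfl (h a b rr)

lemma leaf_avoids : BTree.leaf.Avoids pat := by
  simp [Avoids, Contains, Matches, pat]

lemma one_le_leaves (T : BTree) : 1 ≤ T.leaves := by
  induction T with
  | leaf => simp [leaves]
  | node l r ihl ihr => simp [leaves]; omega

lemma avoids_decode (bs : List Bool) : (decode bs).Avoids pat := by
  induction bs with
  | nil => simp [decode, avoids_node_iff, Avoids, Contains, Matches, pat]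
  | cons b bs ih =>
    obtain ⟨l, r, h⟩ := decode_node bs
    cases b
    · rw [decode, avoids_node_iff]
      exact ⟨ih, leaf_avoids, by simp⟩
    · have ih' := ih
      rw [h, avoids_node_iff] at ih'
      obtain ⟨hl, hr, hshape⟩ := ih'
      simp only [decode, h]
      rw [avoids_node_iff]
      refine ⟨hl, ?_, by simp⟩
      rw [avoids_node_iff]
      refine ⟨leaf_avoids, hr, hshape⟩

lemma encode_decode (bs : List Bool) : encode (decode bs) = bs := by
  induction bs with
  | nil => simp [decode, encode]
  | cons b bs ih =>
    obtain ⟨l, r, h⟩ := decode_node bs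
    cases b
    · rw [decode, h]
      simp only [encode]
      rw [← h, ih]
    · simp only [decode, h, encode]
      rw [← h, ih]

theorem decode_encode : ∀ T : BTree, T.Avoids pat → 2 ≤ T.leaves →
    decode (encode T) = T
  | .leaf, _, h2 => absurd h2 (by simp [leaves])
  | .node .leaf .leaf, _, _ => by simp [encode, decode]
  | .node (.node a b) .leaf, hT, _ => by
    have hl : (BTree.node a b).Avoids pat := ((avoids_node_iff _ _).1 hT).1
    simp only [encode, decode]
    rw [decode_encode (.node a b) hl
      (by have := one_le_leaves a; have := one_le_leaves b; simp [leaves]; omega)]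
  | .node l (.node (.node a b) rr), hT, _ => by
    exact absurd rfl (((avoids_node_iff _ _).1 hT).2.2 a b rr)
  | .node l (.node .leaf rr), hT, _ => by
    obtain ⟨hl, hr, -⟩ := (avoids_node_iff _ _).1 hT
    obtain ⟨-, hrr, hsh⟩ := (avoids_node_iff _ _).1 hr
    have key : decode (encode (BTree.node l rr)) = .node l rr :=
      decode_encode (.node l rr) ((avoids_node_iff _ _).2 ⟨hl, hrr, hsh⟩)
        (by have := one_le_leaves l; have := one_le_leaves rr; simp [leaves]; omega)
    simp only [encode, decode, key]

end BTreeAux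

open BTreeAux in
theorem stmt_10 (n : ℕ) (hn : 2 ≤ n) :
    Nat.card {T : BTree //
      T.leaves = n ∧ T.Avoids (.node .leaf (.node (.node .leaf .leaf) .leaf))} =
      2 ^ (n - 2) := by
  have e : List.Vector Bool (n - 2) ≃
      {T : BTree //
        T.leaves = n ∧ T.Avoids (.node .leaf (.node (.node .leaf .leaf) .leaf))} :=
    { toFun := fun v => ⟨decode v.1,
        by rw [leaves_decode, v.2]; omega, avoids_decode v.1⟩
      invFun := fun T => ⟨encode T.1, by
        have h1 := decode_encode T.1 T.2.2 (le_of_le_of_eq hn T.2.1.symm)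
        have h2 := leaves_decode (encode T.1)
        rw [h1, T.2.1] at h2
        omega⟩
      left_inv := fun v => Subtype.ext (encode_decode v.1)
      right_inv := fun T => Subtype.ext
        (decode_encode T.1 T.2.2 (le_of_le_of_eq hn T.2.1.symm)) }
  have hc := Nat.card_congr e
  rw [← hc, Nat.card_eq_fintype_card, card_vector]
  simp
end

section
/- For every n ≥ 1, the number of full binary trees with n leaves avoiding the left comb with 4 leaves, t1 = node(node(node(L,L), L), L), equals the Motzkin number M(n-1). -/
def motzkin : ℕ → ℕ
  | 0 => 1
  | 1 => 1
  | n + 2 => motzkin (n + 1) + ∑ i : Fin (n + 1), motzkin i * motzkin (n - i)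


abbrev t1 : BTree := .node (.node (.node .leaf .leaf) .leaf) .leaf

open BTree in
lemma avoids_iff (T : BTree) : T.Avoids t1 ↔
    T = .leaf ∨ (∃ r, T = .node .leaf r ∧ r.Avoids t1) ∨
    (∃ s r, T = .node (.node .leaf s) r ∧ s.Avoids t1 ∧ r.Avoids t1) := by
  match T with
  | .leaf => simp [Avoids, Contains, Matches]
  | .node .leaf r =>
      simp [Avoids, Contains, Matches]
  | .node (.node .leaf s) r =>
      simp [Avoids, Contains, Matches]
  | .node (.node (.node a b) s) r =>
      simp [Avoids, Contains, Matches]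

def avoidSet : ℕ → Finset BTree
  | 0 => ∅
  | 1 => {.leaf}
  | n+2 =>
      ((avoidSet (n+1)).image (fun r => .node .leaf r)) ∪
      (Finset.univ : Finset (Fin (n+1))).biUnion (fun i =>
        (avoidSet (i+1)).biUnion fun s =>
          (avoidSet (n-i)).image fun r => .node (.node .leaf s) r)
  decreasing_by
  · omega
  · omega
  · omega

lemma leaves_pos (T : BTree) : 1 ≤ T.leaves := by
  induction T with
  | leaf => simp [BTree.leaves]
  | node l r ihl ihr => simp [BTree.leaves]; omega

lemma leaves_eq_one {T : BTree} : T.leaves = 1 ↔ T = .leaf := by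
  cases T with
  | leaf => simp [BTree.leaves]
  | node l r =>
    simp [BTree.leaves]
    have := leaves_pos l; have := leaves_pos r
    intro h; omega

lemma mem_avoidSet : ∀ n, ∀ T : BTree, T ∈ avoidSet n ↔ T.leaves = n ∧ T.Avoids t1 := by
  intro n
  induction n using Nat.strong_induction_on with
  | _ n ih =>
  intro T
  match n with
  | 0 =>
    simp only [avoidSet, Finset.notMem_empty, false_iff, not_and]
    intro h
    have := leaves_pos T; omega
  | 1 =>
    simp only [avoidSet, Finset.mem_singleton]
    constructor
    · rintro rfl
      exact ⟨rfl, by simp [BTree.Avoids, BTree.Contains, BTree.Matches]⟩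
    · rintro ⟨h, -⟩
      exact leaves_eq_one.mp h
  | n+2 =>
    rw [avoidSet]
    simp only [Finset.mem_union, Finset.mem_image, Finset.mem_biUnion, Finset.mem_univ, true_and]
    constructor
    · rintro (⟨r, hr, rfl⟩ | ⟨i, s, hs, r, hr, rfl⟩)
      · rw [ih (n+1) (by omega)] at hr
        refine ⟨by simp [BTree.leaves, hr.1]; omega, ?_⟩
        rw [avoids_iff]
        exact Or.inr (Or.inl ⟨r, rfl, hr.2⟩)
      · rw [ih (i+1) (by omega)] at hs
        rw [ih (n-i) (by have := i.isLt; omega)] at hr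
        have hi := i.isLt
        have := leaves_pos r
        refine ⟨by simp [BTree.leaves, hs.1, hr.1]; omega, ?_⟩
        rw [avoids_iff]
        exact Or.inr (Or.inr ⟨s, r, rfl, hs.2, hr.2⟩)
    · rintro ⟨hl, hav⟩
      rw [avoids_iff] at hav
      rcases hav with rfl | ⟨r, rfl, hr⟩ | ⟨s, r, rfl, hs, hr⟩
      · simp [BTree.leaves] at hl
      · left
        refine ⟨r, ?_, rfl⟩
        rw [ih (n+1) (by omega)]
        simp [BTree.leaves] at hl
        exact ⟨by omega, hr⟩
      · right
        simp [BTree.leaves] at hl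
        have hsp := leaves_pos s; have hrp := leaves_pos r
        refine ⟨⟨s.leaves - 1, by omega⟩, s, ?_, r, ?_, rfl⟩
        · rw [ih (s.leaves - 1 + 1) (by omega)]
          exact ⟨by omega, hs⟩
        · rw [ih (n - (s.leaves - 1)) (by omega)]
          exact ⟨by omega, hr⟩

lemma card_avoidSet_rec (n : ℕ) : (avoidSet (n+2)).card =
    (avoidSet (n+1)).card + ∑ i : Fin (n+1), (avoidSet (i+1)).card * (avoidSet (n-i)).card := by
  rw [avoidSet]
  rw [Finset.card_union_of_disjoint]
  · congr 1
    · rw [Finset.card_image_of_injective]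
      intro a b h
      simpa using h
    · rw [Finset.card_biUnion]
      · apply Finset.sum_congr rfl
        intro i _
        rw [Finset.card_biUnion]
        · rw [Finset.sum_congr rfl (fun s _ => Finset.card_image_of_injective _ ?_)]
          · rw [Finset.sum_const, smul_eq_mul]
          · intro a b h
            simpa using h
        · intro s hs s' hs' hne
          simp only [Finset.disjoint_left, Finset.mem_image]
          rintro t ⟨r, hr, rfl⟩ ⟨r', hr', h⟩
          apply hne
          simp only [BTree.node.injEq] at h
          exact h.1.2.symm
      · intro i _ j _ hne
        simp only [Finset.disjoint_left, Finset.mem_biUnion, Finset.mem_image]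
        rintro t ⟨s, hs, r, hr, rfl⟩ ⟨s', hs', r', hr', h⟩
        simp only [BTree.node.injEq] at h
        obtain ⟨⟨-, rfl⟩, rfl⟩ := h
        rw [mem_avoidSet] at hs hs'
        apply hne
        have : (i : ℕ) + 1 = (j : ℕ) + 1 := by rw [← hs.1, ← hs'.1]
        exact Fin.ext (by omega)
  · simp only [Finset.disjoint_left, Finset.mem_image, Finset.mem_biUnion, Finset.mem_univ,
      true_and]
    rintro t ⟨r, hr, rfl⟩ ⟨i, s, hs, r', hr', h⟩
    simp at h

lemma card_avoidSet : ∀ n, (avoidSet (n+1)).card = motzkin n := by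
  intro n
  induction n using Nat.strong_induction_on with
  | _ n ih =>
  match n with
  | 0 => simp [avoidSet, motzkin]
  | n+1 =>
    rw [card_avoidSet_rec]
    match n with
    | 0 =>
      simp [avoidSet, motzkin]
    | m+1 =>
      rw [ih (m+1) (by omega)]
      show motzkin (m+1) + _ = motzkin (m+2)
      rw [show motzkin (m+2) = motzkin (m+1) + ∑ i : Fin (m+1), motzkin i * motzkin (m-i)
        from by rw [motzkin]]
      congr 1
      rw [Fin.sum_univ_castSucc]
      have hlast : (avoidSet (m+1-(Fin.last (m+1) : Fin (m+2)))).card = 0 := by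
        simp [avoidSet]
      simp only [Fin.val_last, Nat.sub_self] at hlast ⊢
      rw [hlast, Nat.mul_zero, Nat.add_zero]
      apply Finset.sum_congr rfl
      intro i _
      have hi := i.isLt
      rw [Fin.coe_castSucc, ih i (by omega),
        show m+1-(i:ℕ) = (m-(i:ℕ))+1 by omega, ih (m-(i:ℕ)) (by omega)]

theorem stmt_12 (n : ℕ) (hn : 1 ≤ n) :
    Nat.card {T : BTree //
      T.leaves = n ∧ T.Avoids (.node (.node (.node .leaf .leaf) .leaf) .leaf)} =
      motzkin (n - 1) := by
  obtain ⟨m, rfl⟩ : ∃ m, n = m + 1 := ⟨n - 1, by omega⟩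
  have e : {T : BTree // T.leaves = m + 1 ∧ T.Avoids t1} ≃ ↥(avoidSet (m + 1)) :=
    Equiv.subtypeEquivRight (fun T => (mem_avoidSet (m + 1) T).symm)
  rw [Nat.card_congr e, Nat.card_eq_finsetCard, card_avoidSet]
  simp
end

section
/- Let a(n) be the number of full binary trees with n leaves avoiding the left comb pattern with 4 leaves. Then a(1) = 1 and for all n ≥ 1, a(n+1) = a(n) + Σ_{k=1}^{n-1} a(k)·a(n-k) (the Motzkin recurrence shifted by one). -/
noncomputable def a (n : ℕ) : ℕ :=
  Nat.card {T : BTree //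
    T.leaves = n ∧ T.Avoids (.node (.node (.node .leaf .leaf) .leaf) .leaf)}

namespace BTree

def pat : BTree := .node (.node (.node .leaf .leaf) .leaf) .leaf

def S (n : ℕ) := {T : BTree // T.leaves = n ∧ T.Avoids pat}

lemma a_eq (n : ℕ) : a n = Nat.card (S n) := rfl

lemma leaves_pos (T : BTree) : 1 ≤ T.leaves := by
  induction T with
  | leaf => simp [leaves]
  | node l r ihl ihr => simp [leaves]; omega

lemma avoids_node_leaf (r : BTree) : (node leaf r).Avoids pat ↔ r.Avoids pat := by
  simp [Avoids, Contains, Matches, pat]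

lemma avoids_node2 (x r : BTree) :
    (node (node leaf x) r).Avoids pat ↔ x.Avoids pat ∧ r.Avoids pat := by
  simp [Avoids, Contains, Matches, pat]


lemma not_avoids3 (a b c r : BTree) : ¬ (node (node (node a b) c) r).Avoids pat := by
  simp [Avoids, Contains, Matches, pat]

end BTree

namespace BTree

def enc : BTree → List Bool
  | leaf => [false]
  | node l r => true :: (enc l ++ enc r)

lemma enc_append : ∀ (T T' : BTree) (s s' : List Bool),
    enc T ++ s = enc T' ++ s' → T = T' ∧ s = s' := by
  intro T
  induction T with
  | leaf =>
    intro T' s s' h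
    cases T' with
    | leaf => simpa [enc] using h
    | node l r => simp [enc] at h
  | node l r ihl ihr =>
    intro T' s s' h
    cases T' with
    | leaf => simp [enc] at h
    | node l' r' =>
      simp only [enc, List.cons_append, List.cons.injEq, List.append_assoc] at h
      obtain ⟨hl, hs⟩ := ihl l' _ _ h.2
      obtain ⟨hr, hs'⟩ := ihr r' _ _ hs
      exact ⟨by rw [hl, hr], hs'⟩

lemma enc_injective : Function.Injective enc := by
  intro T T' h
  exact (enc_append T T' [] [] (by simpa using h)).1

lemma enc_length (T : BTree) : (enc T).length = 2 * T.leaves - 1 := by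
  induction T with
  | leaf => simp [enc, leaves]
  | node l r ihl ihr =>
    have := leaves_pos l
    have := leaves_pos r
    simp [enc, leaves, ihl, ihr]
    omega

instance finite_S (n : ℕ) : Finite (S n) := by
  haveI : Finite {l : List Bool // l.length = 2 * n - 1} :=
    Finite.of_fintype (List.Vector Bool (2 * n - 1))
  apply Finite.of_injective
    (fun (T : S n) => (⟨T.1.enc, by rw [enc_length, T.2.1]⟩ : List.Vector Bool (2 * n - 1)))
  intro T T' h
  exact Subtype.ext (enc_injective (by simpa using congrArg Subtype.val h))

end BTree

namespace BTree

def toFun (n : ℕ) (hn : 1 ≤ n) :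
    S (n + 1) → S n ⊕ (Σ k : (Finset.Icc 1 (n - 1) : Finset ℕ), S k × S (n - k))
  | ⟨leaf, h⟩ => absurd h.1 (by simp [leaves]; omega)
  | ⟨node leaf r, h⟩ => Sum.inl ⟨r, by
      have h1 := h.1
      have h2 := (avoids_node_leaf r).1 h.2
      simp [leaves] at h1
      exact ⟨by omega, h2⟩⟩
  | ⟨node (node leaf x) r, h⟩ =>
      Sum.inr ⟨⟨x.leaves, by
          have h1 := h.1
          have := leaves_pos x; have := leaves_pos r
          simp [leaves] at h1
          simp only [Finset.mem_Icc]; omega⟩,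
        ⟨x, rfl, ((avoids_node2 x r).1 h.2).1⟩,
        ⟨r, by
          show r.leaves = n - x.leaves
          have h1 := h.1
          have := leaves_pos x; have := leaves_pos r
          simp [leaves] at h1
          omega, ((avoids_node2 x r).1 h.2).2⟩⟩
  | ⟨node (node (node a b) c) r, h⟩ => absurd h.2 (not_avoids3 a b c r)

def invFun (n : ℕ) :
    (S n ⊕ (Σ k : (Finset.Icc 1 (n - 1) : Finset ℕ), S k × S (n - k))) → S (n + 1)
  | Sum.inl ⟨r, h⟩ => ⟨node leaf r, by
      refine ⟨?_, (avoids_node_leaf r).2 h.2⟩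
      simp [leaves, h.1, Nat.add_comm]⟩
  | Sum.inr ⟨⟨k, hk⟩, ⟨x, hx⟩, ⟨r, hr⟩⟩ => ⟨node (node leaf x) r, by
      simp only [Finset.mem_Icc] at hk
      refine ⟨?_, (avoids_node2 x r).2 ⟨hx.2, hr.2⟩⟩
      have hx1 := hx.1; have hr1 := hr.1
      simp only at hx1 hr1
      simp [leaves, hx1, hr1]
      omega⟩

noncomputable def theEquiv (n : ℕ) (hn : 1 ≤ n) :
    S (n + 1) ≃ (S n ⊕ (Σ k : (Finset.Icc 1 (n - 1) : Finset ℕ), S k × S (n - k))) where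
  toFun := toFun n hn
  invFun := invFun n
  left_inv := by
    rintro ⟨T, h⟩
    match T, h with
    | node leaf r, h => rfl
    | node (node leaf x) r, h => rfl
    | leaf, h => exact absurd h.1 (by simp [leaves]; omega)
    | node (node (node a b) c) r, h => exact absurd h.2 (not_avoids3 a b c r)
  right_inv := by
    rintro (⟨r, h⟩ | ⟨⟨k, hk⟩, ⟨x, hx1, hx2⟩, ⟨r, hr1, hr2⟩⟩)
    · rfl
    · simp only at hx1
      subst hx1
      rfl

end BTree

theorem stmt_13 :
    a 1 = 1 ∧
    ∀ n : ℕ, 1 ≤ n →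
      a (n + 1) = a n + ∑ k ∈ Finset.Icc 1 (n - 1), a k * a (n - k) := by
  constructor
  · have e : BTree.S 1 ≃ PUnit.{1} :=
      { toFun := fun _ => PUnit.unit
        invFun := fun _ => ⟨BTree.leaf, rfl, rfl⟩
        left_inv := by
          rintro ⟨T, h⟩
          cases T with
          | leaf => rfl
          | node l r =>
            exfalso
            have h1 := h.1
            have := BTree.leaves_pos l; have := BTree.leaves_pos r
            simp [BTree.leaves] at h1
            omega
        right_inv := fun _ => rfl }
    rw [BTree.a_eq, Nat.card_congr e]
    simp
  · intro n hn
    rw [BTree.a_eq, Nat.card_congr (BTree.theEquiv n hn), Nat.card_sum, ← BTree.a_eq]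
    congr 1
    classical
    haveI : ∀ i : (Finset.Icc 1 (n - 1) : Finset ℕ), Fintype (BTree.S i.1 × BTree.S (n - i.1)) :=
      fun i => Fintype.ofFinite _
    rw [Nat.card_eq_fintype_card, Fintype.card_sigma]
    simp_rw [← Nat.card_eq_fintype_card, Nat.card_prod, ← BTree.a_eq]
    exact Finset.sum_coe_sort (Finset.Icc 1 (n - 1)) (fun k => a k * a (n - k))
end
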